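/- arXiv:1710.11330 — 3 statements merged into one kernel-verified Lean document; each statement's English description precedes it below -/
import Mathlib

section
/- Let B be a box in Z^d partitioned into disjoint boxes B_1,...,B_k, with fixed boundary height functions induced by a common height function on B. Define F_B = ln Z_{B} where Z_B = Σ_{h ∈ M(B, h_∂B)} exp(H(h)) is the partition function over height functions on B with the fixed boundary data, and similarly F_{B_i}. If |ω_e| ≤ C for all edges e, then F_B ≥ Σ_{i=1}^k F_{B_i} − d·C·Σ_{i=1}^k |∂B_i|. -/
open Filter

/-- Adjacency in `ℤ^d`: `x ∼ y` iff their `l¹`-distance is 1. -/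
def adjZ {d : ℕ} (x y : Fin d → ℤ) : Prop := (∑ i, |x i - y i|) = 1

/-- The discrete hypercube `S_n = {0,...,n-1}^d ⊂ ℤ^d`. -/
noncomputable def cubeZ (d n : ℕ) : Finset (Fin d → ℤ) := Fintype.piFinset fun _ => Finset.Ico (0 : ℤ) (n : ℤ)

/-- The inner boundary `∂B = {x ∈ B : ∃ y ∉ B, x ∼ y}`. -/
noncomputable def ibdZ {d : ℕ} (B : Finset (Fin d → ℤ)) : Finset (Fin d → ℤ) :=
  @Finset.filter _ (fun x => ∃ y, y ∉ B ∧ adjZ x y) (Classical.decPred _) B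

/-- A box in `ℤ^d`: a product of integer intervals `[aᵢ, bᵢ)`. -/
def IsBoxZ {d : ℕ} (B : Finset (Fin d → ℤ)) : Prop :=
  ∃ a b : Fin d → ℤ, (∀ i, a i < b i) ∧ B = Fintype.piFinset fun i => Finset.Ico (a i) (b i)

/-- `h` is a height function on `B`: `|h(x) − h(y)| = 1` for adjacent `x, y ∈ B`. -/
def hgt {d : ℕ} (B : Finset (Fin d → ℤ)) (h : (Fin d → ℤ) → ℤ) : Prop :=
  ∀ x ∈ B, ∀ y ∈ B, adjZ x y → |h x - h y| = 1

/-- The Hamiltonian `H(h) = (1/2) Σ_{x∼y∈B} ω_{e_{h(x),h(y)}}`; the edge of `ℤ` between the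
adjacent integers `h(x)` and `h(y)` is recorded by its lower endpoint, and the sum runs over
ordered pairs of adjacent vertices of `B` (each unordered pair counted twice). -/
noncomputable def ham {d : ℕ} (w : ℤ → ℝ) (B : Finset (Fin d → ℤ))
    (h : (Fin d → ℤ) → ℤ) : ℝ :=
  (1 / 2) * ∑ p ∈ @Finset.filter _ (fun p => adjZ p.1 p.2) (Classical.decPred _) (B ×ˢ B),
    w (min (h p.1) (h p.2))

/-- `M(B, h_∂B)`: height functions on `B` agreeing with the boundary data `hb` on the inner
boundary of `B` (normalized to vanish off `B`). -/
def Mset {d : ℕ} (B : Finset (Fin d → ℤ)) (hb : (Fin d → ℤ) → ℤ) :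
    Set ((Fin d → ℤ) → ℤ) :=
  {h | hgt B h ∧ (∀ x ∈ ibdZ B, h x = hb x) ∧ (∀ x ∉ B, h x = 0)}

/-- The partition function `Z_{B, h_∂B, ω} = Σ_{h ∈ M(B,h_∂B)} exp(H(h))`. -/
noncomputable def Zfn {d : ℕ} (w : ℤ → ℝ) (B : Finset (Fin d → ℤ))
    (hb : (Fin d → ℤ) → ℤ) : ℝ :=
  ∑' h : Mset B hb, Real.exp (ham w B h.1)

namespace LogZAux

variable {d : ℕ}

lemma adjZ_symm {x y : Fin d → ℤ} (h : adjZ x y) : adjZ y x := by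
  unfold adjZ at *
  rw [← h]
  exact Finset.sum_congr rfl fun i _ => abs_sub_comm _ _

lemma adjZ_exists {x y : Fin d → ℤ} (h : adjZ x y) :
    ∃ j : Fin d, |x j - y j| = 1 ∧ ∀ i, i ≠ j → y i = x i := by
  unfold adjZ at h
  by_cases hxy : ∀ i, y i = x i
  · exfalso
    have : (∑ i, |x i - y i|) = 0 :=
      Finset.sum_eq_zero fun i _ => by rw [hxy i]; simp
    omega
  push_neg at hxy
  obtain ⟨j, hj⟩ := hxy
  have h1 : (1 : ℤ) ≤ |x j - y j| :=
    Int.one_le_abs (sub_ne_zero.mpr fun e => hj (by omega))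
  have hle : |x j - y j| ≤ ∑ i, |x i - y i| :=
    Finset.single_le_sum (f := fun i => |x i - y i|) (fun i _ => abs_nonneg _) (Finset.mem_univ j)
  have hj1 : |x j - y j| = 1 := by omega
  refine ⟨j, hj1, fun i hi => ?_⟩
  have hrest : ∑ i ∈ Finset.univ.erase j, |x i - y i| = 0 := by
    have h2 := Finset.add_sum_erase Finset.univ (fun i => |x i - y i|) (Finset.mem_univ j)
    have hnn : 0 ≤ ∑ i ∈ Finset.univ.erase j, |x i - y i| :=
      Finset.sum_nonneg fun i _ => abs_nonneg _
    omega
  have := (Finset.sum_eq_zero_iff_of_nonneg (fun i _ => abs_nonneg (x i - y i))).mp hrest i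
    (Finset.mem_erase.mpr ⟨hi, Finset.mem_univ i⟩)
  have : |x i - y i| = 0 := this
  have := abs_eq_zero.mp this
  omega

/-- The (at most `2d`) neighbors of a point. -/
noncomputable def nbrs (x : Fin d → ℤ) : Finset (Fin d → ℤ) :=
  (Finset.univ : Finset (Fin d × Bool)).image
    (fun jb => Function.update x jb.1 (x jb.1 + if jb.2 then 1 else -1))

lemma mem_nbrs_of_adj {x y : Fin d → ℤ} (h : adjZ x y) : y ∈ nbrs x := by
  obtain ⟨j, hj1, hrest⟩ := adjZ_exists h
  rcases abs_eq (by norm_num : (0:ℤ) ≤ 1) |>.mp hj1 with hc | hc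
  · refine Finset.mem_image.mpr ⟨(j, false), Finset.mem_univ _, ?_⟩
    funext i
    by_cases hij : i = j
    · subst hij; simp [Function.update_self]; omega
    · simp [Function.update_of_ne hij, hrest i hij]
  · refine Finset.mem_image.mpr ⟨(j, true), Finset.mem_univ _, ?_⟩
    funext i
    by_cases hij : i = j
    · subst hij; simp [Function.update_self]; omega
    · simp [Function.update_of_ne hij, hrest i hij]

lemma card_nbrs_le (x : Fin d → ℤ) : (nbrs x).card ≤ 2 * d := by
  calc (nbrs x).card ≤ (Finset.univ : Finset (Fin d × Bool)).card := Finset.card_image_le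
  _ = 2 * d := by simp [Finset.card_univ, mul_comm]


variable {d : ℕ}

lemma hgt_bound {a b : Fin d → ℤ} (hab : ∀ i, a i < b i)
    {h : (Fin d → ℤ) → ℤ}
    (hh : hgt (Fintype.piFinset fun i => Finset.Ico (a i) (b i)) h) :
    ∀ x ∈ (Fintype.piFinset fun i => Finset.Ico (a i) (b i)),
      ∀ y ∈ (Fintype.piFinset fun i => Finset.Ico (a i) (b i)),
        |h x - h y| ≤ ∑ i, |x i - y i| := by
  set B := Fintype.piFinset fun i => Finset.Ico (a i) (b i) with hB
  suffices H : ∀ n : ℕ, ∀ x ∈ B, ∀ y ∈ B, (∑ i, |x i - y i|) = n → |h x - h y| ≤ n by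
    intro x hx y hy
    have hnn : 0 ≤ ∑ i, |x i - y i| := Finset.sum_nonneg fun i _ => abs_nonneg _
    obtain ⟨n, hn⟩ := Int.eq_ofNat_of_zero_le hnn
    rw [hn]
    exact H n x hx y hy hn
  intro n
  induction n with
  | zero =>
    intro x hx y hy hsum
    have hxy : x = y := by
      funext i
      have h0 : |x i - y i| = 0 := by
        have hle : |x i - y i| ≤ ∑ j, |x j - y j| :=
          Finset.single_le_sum (f := fun j => |x j - y j|)
            (fun j _ => abs_nonneg _) (Finset.mem_univ i)
        have := abs_nonneg (x i - y i)
        omega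
      have := abs_eq_zero.mp h0
      omega
    rw [hxy]
    simp
  | succ n ih =>
    intro x hx y hy hsum
    -- find a coordinate where they differ
    have hne : ∃ j, x j ≠ y j := by
      by_contra hc
      push_neg at hc
      have : (∑ i, |x i - y i|) = 0 := Finset.sum_eq_zero fun i _ => by rw [hc i]; simp
      omega
    obtain ⟨j, hj⟩ := hne
    set s : ℤ := if y j < x j then 1 else -1 with hs
    set y' : Fin d → ℤ := Function.update y j (y j + s) with hy'
    have hyB : ∀ i, a i ≤ y i ∧ y i < b i := by
      intro i
      have := (Fintype.mem_piFinset.mp hy) i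
      simp [Finset.mem_Ico] at this
      exact this
    have hxB : ∀ i, a i ≤ x i ∧ x i < b i := by
      intro i
      have := (Fintype.mem_piFinset.mp hx) i
      simp [Finset.mem_Ico] at this
      exact this
    have hy'B : y' ∈ B := by
      rw [hB]
      refine Fintype.mem_piFinset.mpr fun i => ?_
      by_cases hij : i = j
      · subst hij
        rw [hy', Function.update_self, Finset.mem_Ico, hs]
        rcases (hyB i) with ⟨h1, h2⟩
        rcases (hxB i) with ⟨h3, h4⟩
        split <;> omega
      · rw [hy', Function.update_of_ne hij, Finset.mem_Ico]
        exact ⟨(hyB i).1, (hyB i).2⟩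
    have hadj : adjZ y y' := by
      unfold adjZ
      rw [Finset.sum_eq_single j]
      · rw [hy', Function.update_self, hs]; split <;> simp
      · intro i _ hij
        rw [hy', Function.update_of_ne hij]
        simp
      · intro hji; exact absurd (Finset.mem_univ j) hji
    have hsum' : (∑ i, |x i - y' i|) = n := by
      have hterm : |x j - y' j| = |x j - y j| - 1 := by
        rw [hy', Function.update_self, hs]
        have : x j ≠ y j := hj
        rcases lt_trichotomy (x j) (y j) with hc | hc | hc
        · rw [if_neg (by omega), abs_of_nonpos (by omega), abs_of_nonpos (by omega)]; ring
        · omega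
        · rw [if_pos (by omega), abs_of_nonneg (by omega), abs_of_nonneg (by omega)]; ring
      have hsplit : ∀ i, i ≠ j → |x i - y' i| = |x i - y i| := by
        intro i hij
        rw [hy', Function.update_of_ne hij]
      have e1 := Finset.add_sum_erase Finset.univ (fun i => |x i - y' i|) (Finset.mem_univ j)
      have e2 := Finset.add_sum_erase Finset.univ (fun i => |x i - y i|) (Finset.mem_univ j)
      have e3 : ∑ i ∈ Finset.univ.erase j, |x i - y' i|
          = ∑ i ∈ Finset.univ.erase j, |x i - y i| :=
        Finset.sum_congr rfl fun i hi => hsplit i (Finset.mem_erase.mp hi).1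
      omega
    have hd1 := ih x hx y' hy'B hsum'
    have hd2 : |h y' - h y| = 1 := hh y' hy'B y hy (by
      have := hadj
      unfold adjZ at this ⊢
      rw [← this]
      exact Finset.sum_congr rfl fun i _ => abs_sub_comm _ _)
    calc |h x - h y| ≤ |h x - h y'| + |h y' - h y| := by
          have := abs_sub_le (h x) (h y') (h y); linarith
      _ ≤ n + 1 := by omega
    
lemma Mset_finite (hd : 0 < d) {B : Finset (Fin d → ℤ)} (hB : IsBoxZ B)
    (hb : (Fin d → ℤ) → ℤ) : (Mset B hb).Finite := by
  classical
  obtain ⟨a, b, hab, hBeq⟩ := hB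
  have haB : a ∈ B := by
    rw [hBeq]
    exact Fintype.mem_piFinset.mpr fun i => Finset.mem_Ico.mpr ⟨le_refl _, hab i⟩
  -- the corner `a` is on the inner boundary
  have haibd : a ∈ ibdZ B := by
    rw [ibdZ, Finset.mem_filter]
    refine ⟨haB, Function.update a ⟨0, hd⟩ (a ⟨0, hd⟩ - 1), ?_, ?_⟩
    · rw [hBeq]
      intro hc
      have := (Fintype.mem_piFinset.mp hc) ⟨0, hd⟩
      rw [Function.update_self, Finset.mem_Ico] at this
      omega
    · unfold adjZ
      rw [Finset.sum_eq_single (⟨0, hd⟩ : Fin d)]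
      · rw [Function.update_self]; simp
      · intro i _ hij
        rw [Function.update_of_ne hij]; simp
      · intro hji; exact absurd (Finset.mem_univ _) hji
  set D : ℤ := ∑ i, (b i - a i) with hD
  have hdist : ∀ x ∈ B, (∑ i, |x i - a i|) ≤ D := by
    intro x hx
    rw [hD]
    refine Finset.sum_le_sum fun i _ => ?_
    have := (Fintype.mem_piFinset.mp (hBeq ▸ hx)) i
    rw [Finset.mem_Ico] at this
    rw [abs_of_nonneg (by omega)]
    omega
  -- every element of Mset takes values in a fixed finite window
  have hval : ∀ h ∈ Mset B hb, ∀ x, h x ∈ Set.Icc (min 0 (hb a - D)) (max 0 (hb a + D)) := by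
    rintro h ⟨hh, hbd, hz⟩ x
    by_cases hx : x ∈ B
    · have h1 := hgt_bound hab (hBeq ▸ hh) x (hBeq ▸ hx) a (hBeq ▸ haB)
      have h2 : h a = hb a := hbd a haibd
      have h3 := hdist x hx
      rw [Set.mem_Icc]
      have h4 : |h x - h a| ≤ D := le_trans h1 h3
      have h5 : -D ≤ h x - h a ∧ h x - h a ≤ D := abs_le.mp h4
      constructor
      · have := min_le_right (0:ℤ) (hb a - D); omega
      · have := le_max_right (0:ℤ) (hb a + D); omega
    · rw [hz x hx]
      exact Set.mem_Icc.mpr ⟨min_le_left _ _, le_max_left _ _⟩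
  -- inject into functions on B
  have hinj : Set.InjOn (fun h : (Fin d → ℤ) → ℤ => (fun x : ↥B => h x.1)) (Mset B hb) := by
    rintro h1 ⟨_, _, hz1⟩ h2 ⟨_, _, hz2⟩ heq
    funext x
    by_cases hx : x ∈ B
    · exact congrFun heq ⟨x, hx⟩
    · rw [hz1 x hx, hz2 x hx]
  refine Set.Finite.of_finite_image ?_ hinj
  refine Set.Finite.subset (Set.Finite.pi (fun _ : ↥B =>
    Set.finite_Icc (min 0 (hb a - D)) (max 0 (hb a + D)))) ?_
  rintro g ⟨h, hh, rfl⟩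
  exact fun x _ => hval h hh x.1

lemma Mset_nonempty {B B' : Finset (Fin d → ℤ)} (hsub : B' ⊆ B)
    {H₀ : (Fin d → ℤ) → ℤ} (hH₀ : hgt B H₀) :
    (fun x => if x ∈ B' then H₀ x else 0) ∈ Mset B' H₀ := by
  classical
  refine ⟨?_, ?_, ?_⟩
  · intro x hx y hy hadj
    dsimp only
    rw [if_pos hx, if_pos hy]
    exact hH₀ x (hsub hx) y (hsub hy) hadj
  · intro x hx
    rw [ibdZ, Finset.mem_filter] at hx
    dsimp only
    rw [if_pos hx.1]
  · intro x hx
    dsimp only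
    rw [if_neg hx]

noncomputable def glueF {k : ℕ} (Bs : Fin k → Finset (Fin d → ℤ))
    (p : ∀ _ : Fin k, (Fin d → ℤ) → ℤ) (x : Fin d → ℤ) : ℤ :=
  ∑ i, if x ∈ Bs i then p i x else 0

variable {k : ℕ} {Bs : Fin k → Finset (Fin d → ℤ)} {B : Finset (Fin d → ℤ)}

lemma glueF_eq_of_mem (hdisj : ∀ i j, i ≠ j → Disjoint (Bs i) (Bs j))
    (p : ∀ _ : Fin k, (Fin d → ℤ) → ℤ) {i : Fin k} {x : Fin d → ℤ} (hx : x ∈ Bs i) :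
    glueF Bs p x = p i x := by
  rw [glueF, Finset.sum_eq_single i]
  · rw [if_pos hx]
  · intro j _ hji
    rw [if_neg]
    intro hc
    exact (Finset.disjoint_left.mp (hdisj j i hji) hc) hx
  · intro hni; exact absurd (Finset.mem_univ i) hni

lemma glueF_eq_zero (p : ∀ _ : Fin k, (Fin d → ℤ) → ℤ) {x : Fin d → ℤ}
    (hx : ∀ i, x ∉ Bs i) : glueF Bs p x = 0 :=
  Finset.sum_eq_zero fun i _ => if_neg (hx i)

lemma glueF_mem (hdisj : ∀ i j, i ≠ j → Disjoint (Bs i) (Bs j))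
    (hunion : Finset.univ.biUnion Bs = B)
    {H₀ : (Fin d → ℤ) → ℤ} (hH₀ : hgt B H₀)
    {p : ∀ _ : Fin k, (Fin d → ℤ) → ℤ} (hp : ∀ i, p i ∈ Mset (Bs i) H₀) :
    glueF Bs p ∈ Mset B H₀ := by
  classical
  have hsub : ∀ i, Bs i ⊆ B := fun i =>
    hunion ▸ Finset.subset_biUnion_of_mem Bs (Finset.mem_univ i)
  have hmem : ∀ x ∈ B, ∃ i, x ∈ Bs i := by
    intro x hx
    rw [← hunion] at hx
    obtain ⟨i, _, hi⟩ := Finset.mem_biUnion.mp hx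
    exact ⟨i, hi⟩
  -- key: on the inner boundary of each `Bs i`, glue equals `H₀`
  have hbd : ∀ i, ∀ x ∈ ibdZ (Bs i), glueF Bs p x = H₀ x := by
    intro i x hx
    have hxB : x ∈ Bs i := Finset.mem_of_mem_filter x hx
    rw [glueF_eq_of_mem hdisj p hxB]
    exact (hp i).2.1 x hx
  refine ⟨?_, ?_, ?_⟩
  · -- height function on B
    intro x hx y hy hadj
    obtain ⟨i, hxi⟩ := hmem x hx
    by_cases hyi : y ∈ Bs i
    · rw [glueF_eq_of_mem hdisj p hxi, glueF_eq_of_mem hdisj p hyi]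
      exact (hp i).1 x hxi y hyi hadj
    · have hxibd : x ∈ ibdZ (Bs i) := by
        rw [ibdZ, Finset.mem_filter]
        exact ⟨hxi, y, hyi, hadj⟩
      obtain ⟨j, hyj⟩ := hmem y hy
      have hxj : x ∉ Bs j := by
        intro hc
        rcases eq_or_ne i j with rfl | hij
        · exact hyi hyj
        · exact (Finset.disjoint_left.mp (hdisj i j hij) hxi) hc
      have hyibd : y ∈ ibdZ (Bs j) := by
        rw [ibdZ, Finset.mem_filter]
        refine ⟨hyj, x, hxj, ?_⟩
        unfold adjZ at hadj ⊢
        rw [← hadj]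
        exact Finset.sum_congr rfl fun i _ => abs_sub_comm _ _
      rw [hbd i x hxibd, hbd j y hyibd]
      exact hH₀ x hx y hy hadj
  · -- boundary data
    intro x hx
    rw [ibdZ, Finset.mem_filter] at hx
    obtain ⟨hxB, y, hyB, hadj⟩ := hx
    obtain ⟨i, hxi⟩ := hmem x hxB
    have : x ∈ ibdZ (Bs i) := by
      rw [ibdZ, Finset.mem_filter]
      exact ⟨hxi, y, fun hc => hyB (hsub i hc), hadj⟩
    exact hbd i x this
  · -- vanishing off B
    intro x hx
    refine glueF_eq_zero p fun i hc => hx (hsub i hc)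

lemma ham_glue (hdisj : ∀ i j, i ≠ j → Disjoint (Bs i) (Bs j))
    (hunion : Finset.univ.biUnion Bs = B)
    (w : ℤ → ℝ) {C : ℝ} (hw : ∀ a : ℤ, |w a| ≤ C)
    (p : ∀ _ : Fin k, (Fin d → ℤ) → ℤ) :
    (∑ i, ham w (Bs i) (p i)) - (d : ℝ) * C * ∑ i, ((ibdZ (Bs i)).card : ℝ)
      ≤ ham w B (glueF Bs p) := by
  classical
  have hC : 0 ≤ C := le_trans (abs_nonneg _) (hw 0)
  have hsub : ∀ i, Bs i ⊆ B := fun i =>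
    hunion ▸ Finset.subset_biUnion_of_mem Bs (Finset.mem_univ i)
  set g := glueF Bs p with hg
  set f : (Fin d → ℤ) × (Fin d → ℤ) → ℝ := fun q => w (min (g q.1) (g q.2)) with hf
  set P : Finset ((Fin d → ℤ) × (Fin d → ℤ)) :=
    Finset.filter (fun q => adjZ q.1 q.2) (B ×ˢ B) with hP
  set Pi : Fin k → Finset ((Fin d → ℤ) × (Fin d → ℤ)) :=
    fun i => Finset.filter (fun q => adjZ q.1 q.2) (Bs i ×ˢ Bs i) with hPi
  set Q : Finset ((Fin d → ℤ) × (Fin d → ℤ)) := Finset.univ.biUnion Pi with hQ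
  have hQP : Q ⊆ P := by
    intro q hq
    obtain ⟨i, _, hqi⟩ := Finset.mem_biUnion.mp hq
    rw [hPi] at hqi
    simp only [Finset.mem_filter, Finset.mem_product] at hqi ⊢
    rw [hP]
    simp only [Finset.mem_filter, Finset.mem_product]
    exact ⟨⟨hsub i hqi.1.1, hsub i hqi.1.2⟩, hqi.2⟩
  have hPdisj : ∀ i ∈ (Finset.univ : Finset (Fin k)), ∀ j ∈ Finset.univ,
      i ≠ j → Disjoint (Pi i) (Pi j) := by
    intro i _ j _ hij
    rw [Finset.disjoint_left]
    intro q hqi hqj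
    rw [hPi] at hqi hqj
    simp only [Finset.mem_filter, Finset.mem_product] at hqi hqj
    exact (Finset.disjoint_left.mp (hdisj i j hij) hqi.1.1) hqj.1.1
  -- sum over Q equals sum of box Hamiltonians (doubled)
  have hQsum : ∑ q ∈ Q, f q = ∑ i, (2 : ℝ) * ham w (Bs i) (p i) := by
    rw [hQ, Finset.sum_biUnion hPdisj]
    refine Finset.sum_congr rfl fun i _ => ?_
    rw [ham]
    rw [show ((1:ℝ)/2) * ∑ q ∈ @Finset.filter _ (fun q => adjZ q.1 q.2) (Classical.decPred _)
        (Bs i ×ˢ Bs i), w (min (p i q.1) (p i q.2))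
      = (1/2) * ∑ q ∈ Pi i, w (min (p i q.1) (p i q.2)) by rw [hPi]]
    rw [← mul_assoc]
    norm_num
    refine Finset.sum_congr rfl fun q hq => ?_
    rw [hPi, Finset.mem_filter, Finset.mem_product] at hq
    rw [hf]
    dsimp only
    rw [hg, glueF_eq_of_mem hdisj p hq.1.1, glueF_eq_of_mem hdisj p hq.1.2]
  -- the cross terms
  have hcross_card : ((P \ Q).card : ℝ) ≤ ∑ i, 2 * d * ((ibdZ (Bs i)).card : ℝ) := by
    have hsubT : P \ Q ⊆ Finset.univ.biUnion (fun i =>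
        (ibdZ (Bs i)).biUnion (fun x => (nbrs x).image (fun y => (x, y)))) := by
      intro q hq
      rw [Finset.mem_sdiff] at hq
      obtain ⟨hqP, hqQ⟩ := hq
      rw [hP, Finset.mem_filter, Finset.mem_product] at hqP
      obtain ⟨⟨hq1, hq2⟩, hadj⟩ := hqP
      have hmem : ∃ i, q.1 ∈ Bs i := by
        rw [← hunion] at hq1
        obtain ⟨i, _, hi⟩ := Finset.mem_biUnion.mp hq1
        exact ⟨i, hi⟩
      obtain ⟨i, hq1i⟩ := hmem
      have hq2i : q.2 ∉ Bs i := by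
        intro hc
        refine hqQ (Finset.mem_biUnion.mpr ⟨i, Finset.mem_univ i, ?_⟩)
        rw [hPi, Finset.mem_filter, Finset.mem_product]
        exact ⟨⟨hq1i, hc⟩, hadj⟩
      refine Finset.mem_biUnion.mpr ⟨i, Finset.mem_univ i, ?_⟩
      refine Finset.mem_biUnion.mpr ⟨q.1, ?_, ?_⟩
      · rw [ibdZ, Finset.mem_filter]
        exact ⟨hq1i, q.2, hq2i, hadj⟩
      · exact Finset.mem_image.mpr ⟨q.2, mem_nbrs_of_adj hadj, rfl⟩
    have h1 : (P \ Q).card ≤ ∑ i, (ibdZ (Bs i)).card * (2 * d) := by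
      calc (P \ Q).card ≤ _ := Finset.card_le_card hsubT
        _ ≤ ∑ i, ((ibdZ (Bs i)).biUnion (fun x => (nbrs x).image (fun y => (x, y)))).card :=
            Finset.card_biUnion_le
        _ ≤ ∑ i, (ibdZ (Bs i)).card * (2 * d) := by
            refine Finset.sum_le_sum fun i _ => ?_
            calc ((ibdZ (Bs i)).biUnion _).card
                ≤ ∑ x ∈ ibdZ (Bs i), ((nbrs x).image (fun y => (x, y))).card :=
                  Finset.card_biUnion_le
              _ ≤ ∑ x ∈ ibdZ (Bs i), 2 * d := Finset.sum_le_sum fun x _ =>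
                  le_trans Finset.card_image_le (card_nbrs_le x)
              _ = (ibdZ (Bs i)).card * (2 * d) := by
                  rw [Finset.sum_const, smul_eq_mul]
    calc ((P \ Q).card : ℝ) ≤ ((∑ i, (ibdZ (Bs i)).card * (2 * d) : ℕ) : ℝ) := by
          exact_mod_cast h1
      _ = ∑ i, 2 * d * ((ibdZ (Bs i)).card : ℝ) := by
          push_cast
          refine Finset.sum_congr rfl fun i _ => by ring
  have hcross : -(C * ∑ i, 2 * d * ((ibdZ (Bs i)).card : ℝ)) ≤ ∑ q ∈ P \ Q, f q := by
    have h1 : ∀ q ∈ P \ Q, -C ≤ f q := by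
      intro q _
      have := hw (min (g q.1) (g q.2))
      have := abs_le.mp this
      exact this.1
    calc -(C * ∑ i, 2 * d * ((ibdZ (Bs i)).card : ℝ))
        ≤ -(C * ((P \ Q).card : ℝ)) := by
          have hsum_nn : (0:ℝ) ≤ ∑ i, 2 * d * ((ibdZ (Bs i)).card : ℝ) :=
            Finset.sum_nonneg fun i _ => by positivity
          nlinarith [hcross_card]
      _ = ∑ _q ∈ P \ Q, (-C) := by rw [Finset.sum_const, nsmul_eq_mul]; ring
      _ ≤ ∑ q ∈ P \ Q, f q := Finset.sum_le_sum h1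
  -- assemble
  have hPsplit : ∑ q ∈ P, f q = ∑ q ∈ P \ Q, f q + ∑ q ∈ Q, f q :=
    (Finset.sum_sdiff hQP).symm
  have hhamB : ham w B g = (1/2) * ∑ q ∈ P, f q := by
    rw [ham, hP, hf]
  rw [hhamB, hPsplit, hQsum]
  have : ∑ i, (2:ℝ) * ham w (Bs i) (p i) = 2 * ∑ i, ham w (Bs i) (p i) := by
    rw [Finset.mul_sum]
  rw [this]
  have hfin : -(C * ∑ i, 2 * d * ((ibdZ (Bs i)).card : ℝ))
      = -2 * ((d:ℝ) * C * ∑ i, ((ibdZ (Bs i)).card : ℝ)) := by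
    rw [Finset.mul_sum, Finset.mul_sum, ← Finset.sum_neg_distrib, Finset.mul_sum]
    exact Finset.sum_congr rfl fun i _ => by ring
  linarith [hcross]


-- d = 0 degenerate case
lemma Zfn_zero_dim (w : ℤ → ℝ) (B : Finset (Fin 0 → ℤ)) (hB : B.Nonempty)
    (hb : (Fin 0 → ℤ) → ℤ) : Zfn w B hb = 0 := by
  classical
  have hadj : ∀ x y : Fin 0 → ℤ, ¬ adjZ x y := by
    intro x y h
    unfold adjZ at h
    simp at h
  have hmemB : ∀ x : Fin 0 → ℤ, x ∈ B := by
    intro x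
    obtain ⟨y, hy⟩ := hB
    have : x = y := funext fun i => i.elim0
    rwa [this]
  have hMuniv : Mset B hb = Set.univ := by
    ext h
    simp only [Mset, Set.mem_setOf_eq, Set.mem_univ, iff_true]
    refine ⟨fun x _ y _ ha => absurd ha (hadj x y), ?_, fun x hx => absurd (hmemB x) hx⟩
    intro x hx
    rw [ibdZ] at hx
    obtain ⟨_, y, hy, _⟩ := (@Finset.mem_filter _ _ (Classical.decPred _) _ _).mp hx
    exact absurd (hmemB y) hy
  have hham : ∀ h, ham w B h = 0 := by
    intro h
    rw [ham]
    have : @Finset.filter _ (fun p => adjZ p.1 p.2) (Classical.decPred _) (B ×ˢ B) = ∅ := by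
      refine Finset.filter_false_of_mem fun p _ => hadj p.1 p.2
    rw [this, Finset.sum_empty, mul_zero]
  have hinf : Infinite ((Fin 0 → ℤ) → ℤ) :=
    Infinite.of_injective (fun n : ℤ => fun _ => n)
      (fun a b hab => congrFun hab (fun i => i.elim0))
  rw [Zfn]
  have : (fun h : ↥(Mset B hb) => Real.exp (ham w B h.1)) = fun _ => (1:ℝ) := by
    funext h
    rw [hham, Real.exp_zero]
  rw [this]
  have hMinf : (Mset B hb).Infinite := by
    rw [hMuniv]
    exact Set.infinite_univ
  haveI : Infinite ↥(Mset B hb) := hMinf.to_subtype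
  have hns : ¬ Summable (fun _ : ↥(Mset B hb) => (1:ℝ)) := by
    intro hs
    have h1 := hs.tendsto_cofinite_zero
    have h2 : Filter.Tendsto (fun _ : ↥(Mset B hb) => (1:ℝ)) Filter.cofinite (nhds 1) :=
      tendsto_const_nhds
    have := tendsto_nhds_unique h1 h2
    norm_num at this
  exact tsum_eq_zero_of_not_summable hns


end LogZAux

/-- **Almost superadditivity of the log-partition function**: if a box `B` is partitioned
into disjoint boxes `B₁,…,B_k` with boundary data induced by a common height function `H₀`
on `B`, and `|ω_e| ≤ C`, then `F_B ≥ Σ_i F_{B_i} − d·C·Σ_i |∂B_i|`, where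
`F_B = ln Z_{B,h_∂B,ω}`. -/
theorem logZ_almost_superadditive (d k : ℕ) (B : Finset (Fin d → ℤ))
    (Bs : Fin k → Finset (Fin d → ℤ))
    (hB : IsBoxZ B) (hBs : ∀ i, IsBoxZ (Bs i))
    (hdisj : ∀ i j, i ≠ j → Disjoint (Bs i) (Bs j))
    (hunion : Finset.univ.biUnion Bs = B)
    (H₀ : (Fin d → ℤ) → ℤ) (hH₀ : hgt B H₀)
    (w : ℤ → ℝ) (C : ℝ) (hw : ∀ a : ℤ, |w a| ≤ C) :
    (∑ i, Real.log (Zfn w (Bs i) H₀)) - (d : ℝ) * C * ∑ i, ((ibdZ (Bs i)).card : ℝ)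
      ≤ Real.log (Zfn w B H₀) := by
  open LogZAux in
  classical
  have hsub : ∀ i, Bs i ⊆ B := fun i =>
    hunion ▸ Finset.subset_biUnion_of_mem Bs (Finset.mem_univ i)
  rcases Nat.eq_zero_or_pos d with rfl | hd
  · -- degenerate dimension-zero case
    have hBne : B.Nonempty := by
      obtain ⟨a, b, hab, hBeq⟩ := hB
      exact ⟨a, by
        rw [hBeq]; exact Fintype.mem_piFinset.mpr fun i => Finset.mem_Ico.mpr ⟨le_refl _, hab i⟩⟩
    have hBsne : ∀ i, (Bs i).Nonempty := by
      intro i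
      obtain ⟨a, b, hab, hBeq⟩ := hBs i
      exact ⟨a, by
        rw [hBeq]; exact Fintype.mem_piFinset.mpr fun j => Finset.mem_Ico.mpr ⟨le_refl _, hab j⟩⟩
    rw [Zfn_zero_dim w B hBne H₀]
    have h1 : ∀ i, Real.log (Zfn w (Bs i) H₀) = 0 := fun i => by
      rw [Zfn_zero_dim w (Bs i) (hBsne i) H₀, Real.log_zero]
    rw [Finset.sum_congr rfl fun i _ => h1 i]
    simp
  · -- main case
    have hfinB : (Mset B H₀).Finite := Mset_finite hd hB H₀
    have hfinI : ∀ i, (Mset (Bs i) H₀).Finite := fun i => Mset_finite hd (hBs i) H₀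
    haveI : Fintype ↥(Mset B H₀) := hfinB.fintype
    haveI instI : ∀ i, Fintype ↥(Mset (Bs i) H₀) := fun i => (hfinI i).fintype
    haveI hneI : ∀ i, Nonempty ↥(Mset (Bs i) H₀) := fun i =>
      ⟨⟨_, Mset_nonempty (hsub i) hH₀⟩⟩
    have hZB : Zfn w B H₀ = ∑ h : ↥(Mset B H₀), Real.exp (ham w B h.1) := by
      rw [Zfn]; exact tsum_fintype _
    have hZI : ∀ i, Zfn w (Bs i) H₀
        = ∑ h : ↥(Mset (Bs i) H₀), Real.exp (ham w (Bs i) h.1) := fun i => by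
      rw [Zfn]; exact tsum_fintype _
    have hZIpos : ∀ i, 0 < Zfn w (Bs i) H₀ := fun i => by
      rw [hZI i]
      exact Finset.sum_pos (fun h _ => Real.exp_pos _) Finset.univ_nonempty
    set E : ℝ := (d : ℝ) * C * ∑ i, ((ibdZ (Bs i)).card : ℝ) with hE
    -- the gluing map
    set G : (∀ i, ↥(Mset (Bs i) H₀)) → ↥(Mset B H₀) :=
      fun p => ⟨glueF Bs (fun i => (p i).1),
        glueF_mem hdisj hunion hH₀ (fun i => (p i).2)⟩ with hG
    have hGinj : Function.Injective G := by
      intro p q hpq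
      funext i
      apply Subtype.ext
      funext x
      by_cases hx : x ∈ Bs i
      · have h1 := congrFun (congrArg Subtype.val hpq) x
        simp only [hG] at h1
        rwa [glueF_eq_of_mem hdisj _ hx, glueF_eq_of_mem hdisj _ hx] at h1
      · rw [(p i).2.2.2 x hx, (q i).2.2.2 x hx]
    -- the key inequality
    have key : Real.exp (-E) * ∏ i, Zfn w (Bs i) H₀ ≤ Zfn w B H₀ := by
      have h1 : ∏ i, Zfn w (Bs i) H₀
          = ∑ p : ∀ i, ↥(Mset (Bs i) H₀), ∏ i, Real.exp (ham w (Bs i) (p i).1) := by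
        rw [Finset.prod_congr rfl fun i _ => hZI i]
        exact Fintype.prod_sum _
      rw [h1, Finset.mul_sum]
      have h2 : ∀ p : ∀ i, ↥(Mset (Bs i) H₀),
          Real.exp (-E) * ∏ i, Real.exp (ham w (Bs i) (p i).1)
            ≤ Real.exp (ham w B ((G p).1)) := by
        intro p
        rw [← Real.exp_sum, ← Real.exp_add]
        refine Real.exp_le_exp.mpr ?_
        have := ham_glue hdisj hunion w hw (fun i => (p i).1)
        rw [hE]
        simp only [hG]
        linarith
      calc ∑ p : ∀ i, ↥(Mset (Bs i) H₀),
            Real.exp (-E) * ∏ i, Real.exp (ham w (Bs i) (p i).1)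
          ≤ ∑ p : ∀ i, ↥(Mset (Bs i) H₀), Real.exp (ham w B ((G p).1)) :=
            Finset.sum_le_sum fun p _ => h2 p
        _ = ∑ h ∈ Finset.univ.image G, Real.exp (ham w B h.1) := by
            rw [Finset.sum_image fun p _ q _ hpq => hGinj hpq]
        _ ≤ ∑ h : ↥(Mset B H₀), Real.exp (ham w B h.1) :=
            Finset.sum_le_sum_of_subset_of_nonneg (Finset.subset_univ _)
              (fun h _ _ => le_of_lt (Real.exp_pos _))
        _ = Zfn w B H₀ := hZB.symm
    -- take logarithms
    have hprodpos : 0 < ∏ i, Zfn w (Bs i) H₀ :=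
      Finset.prod_pos fun i _ => hZIpos i
    have hlhspos : 0 < Real.exp (-E) * ∏ i, Zfn w (Bs i) H₀ :=
      mul_pos (Real.exp_pos _) hprodpos
    have hlog := Real.log_le_log hlhspos key
    rw [Real.log_mul (ne_of_gt (Real.exp_pos _)) (ne_of_gt hprodpos),
      Real.log_exp, Real.log_prod (fun i _ => ne_of_gt (hZIpos i))] at hlog
    linarith
end

section
/- (Discrete Kirszbraun theorem for Z-valued height functions.) Let Λ ⊆ Z^m and let g : Λ → Z satisfy |g(x) − g(y)| ≤ |x−y|_{l^1} and g(x) − g(y) ≡ |x−y|_{l^1} (mod 2) for all x,y ∈ Λ. Then g extends to a height function h : Z^m → Z (i.e., |h(x)−h(y)| = 1 for adjacent x,y) with h|_Λ = g. -/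
open Filter

private def DD {d : ℕ} (x y : Fin d → ℤ) : ℤ := ∑ i, |x i - y i|

private lemma dtri {d : ℕ} (x y z : Fin d → ℤ) : DD x z ≤ DD x y + DD y z := by
  rw [DD, DD, DD, ← Finset.sum_add_distrib]
  exact Finset.sum_le_sum fun i _ => abs_sub_le (x i) (y i) (z i)

private lemma dself {d : ℕ} (x : Fin d → ℤ) : DD x x = 0 := by simp [DD]

private lemma dsymm {d : ℕ} (x y : Fin d → ℤ) : DD x y = DD y x :=
  Finset.sum_congr rfl fun _ _ => abs_sub_comm _ _

private lemma dcast {d : ℕ} (x y : Fin d → ℤ) :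
    ((DD x y : ℤ) : ZMod 2) = ((∑ i, x i : ℤ) : ZMod 2) - ((∑ i, y i : ℤ) : ZMod 2) := by
  rw [DD]
  push_cast
  rw [← Finset.sum_sub_distrib]
  refine Finset.sum_congr rfl fun i _ => ?_
  rcases abs_choice (x i - y i) with h | h <;> rw [h]
  · push_cast; ring
  · push_cast; rw [CharTwo.neg_eq]

private def SS {d : ℕ} (Λ : Set (Fin d → ℤ)) (g : (Fin d → ℤ) → ℤ)
    (x : Fin d → ℤ) : Set ℤ := {v | ∃ y ∈ Λ, v = g y + DD x y}

private lemma mem_SS {d : ℕ} {Λ : Set (Fin d → ℤ)} {g : (Fin d → ℤ) → ℤ}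
    {x y : Fin d → ℤ} (hy : y ∈ Λ) : g y + DD x y ∈ SS Λ g x := ⟨y, hy, rfl⟩

private lemma abs_one_of {a : ℤ} (h1 : a ≤ 1) (h2 : -a ≤ 1) (h3 : ((a : ℤ) : ZMod 2) = 1) :
    |a| = 1 := by
  have hne : a ≠ 0 := by
    intro h0
    rw [h0] at h3
    norm_num at h3
  rcases abs_cases a with ⟨e1, e2⟩ | ⟨e1, e2⟩ <;> omega

/-- **Discrete Kirszbraun theorem for `ℤ`-valued height functions**: if `g : Λ → ℤ`
(`Λ ⊆ ℤ^m`) satisfies `|g(x) − g(y)| ≤ |x−y|₁` and `g(x) − g(y) ≡ |x−y|₁ (mod 2)` for all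
`x, y ∈ Λ`, then `g` extends to a height function `h : ℤ^m → ℤ`. -/
theorem discrete_kirszbraun (m : ℕ) (Λ : Set (Fin m → ℤ)) (g : (Fin m → ℤ) → ℤ)
    (hlip : ∀ x ∈ Λ, ∀ y ∈ Λ, |g x - g y| ≤ ∑ i, |x i - y i|)
    (hpar : ∀ x ∈ Λ, ∀ y ∈ Λ, g x - g y ≡ (∑ i, |x i - y i|) [ZMOD 2]) :
    ∃ h : (Fin m → ℤ) → ℤ,
      (∀ x y : Fin m → ℤ, adjZ x y → |h x - h y| = 1) ∧ ∀ x ∈ Λ, h x = g x := by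
  have hlip' : ∀ x ∈ Λ, ∀ y ∈ Λ, |g x - g y| ≤ DD x y := hlip
  have hpar' : ∀ x ∈ Λ, ∀ y ∈ Λ, ((g x - g y : ℤ) : ZMod 2) = ((DD x y : ℤ) : ZMod 2) :=
    fun x hx y hy => (ZMod.intCast_eq_intCast_iff _ _ _).mpr (hpar x hx y hy)
  rcases Λ.eq_empty_or_nonempty with hΛ | ⟨x0, hx0⟩
  · refine ⟨fun x => ∑ i, x i, ?_, by simp [hΛ]⟩
    intro x y hxy
    show |(∑ i, x i) - ∑ i, y i| = 1
    have hD1 : DD x y = 1 := hxy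
    have hle : |(∑ i, x i) - ∑ i, y i| ≤ 1 := by
      rw [← Finset.sum_sub_distrib]
      calc |∑ i, (x i - y i)| ≤ ∑ i, |x i - y i| := Finset.abs_sum_le_sum_abs _ _
        _ = 1 := hxy
    have hc : (((∑ i, x i) - ∑ i, y i : ℤ) : ZMod 2) = 1 := by
      have hd := dcast x y
      rw [hD1] at hd
      push_cast at hd ⊢
      linear_combination -hd
    rcases abs_le.mp hle with ⟨h1, h2⟩
    exact abs_one_of h2 (by omega) hc
  · have hmem : ∀ x : Fin m → ℤ, ∀ y ∈ Λ, g y + DD x y ∈ SS Λ g x := fun _ _ hy => mem_SS hy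
    have hSne : ∀ x, (SS Λ g x).Nonempty := fun x => ⟨_, hmem x x0 hx0⟩
    have hSbdd : ∀ x, BddBelow (SS Λ g x) := by
      intro x
      refine ⟨g x0 - DD x0 x, ?_⟩
      rintro v ⟨y, hy, rfl⟩
      have h1 : g x0 - g y ≤ DD x0 y := le_trans (le_abs_self _) (hlip' x0 hx0 y hy)
      have h2 : DD x0 y ≤ DD x0 x + DD x y := dtri x0 x y
      linarith
    refine ⟨fun x => sInf (SS Λ g x), ?_, ?_⟩
    · intro x y hxy
      show |sInf (SS Λ g x) - sInf (SS Λ g y)| = 1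
      have hD1 : DD x y = 1 := hxy
      have key : ∀ x z : Fin m → ℤ, sInf (SS Λ g x) ≤ sInf (SS Λ g z) + DD x z := by
        intro x z
        rw [← sub_le_iff_le_add]
        apply le_csInf (hSne z)
        rintro v ⟨y, hy, rfl⟩
        have h1 : sInf (SS Λ g x) ≤ g y + DD x y := csInf_le (hSbdd x) (hmem x y hy)
        have h2 : DD x y ≤ DD x z + DD z y := dtri x z y
        linarith
      have hparH : ∀ x : Fin m → ℤ, ((sInf (SS Λ g x) : ℤ) : ZMod 2)
          = ((g x0 : ℤ) : ZMod 2) - ((∑ i, x0 i : ℤ) : ZMod 2)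
            + ((∑ i, x i : ℤ) : ZMod 2) := by
        intro x
        obtain ⟨y, hy, hyv⟩ := Int.csInf_mem (hSne x) (hSbdd x)
        rw [hyv]
        have hgy := hpar' y hy x0 hx0
        rw [dcast y x0] at hgy
        have hd := dcast x y
        push_cast at hgy hd ⊢
        linear_combination hgy + hd
      have h1 := key x y
      have h2 := key y x
      rw [dsymm y x] at h2
      rw [hD1] at h1 h2
      have hc : ((sInf (SS Λ g x) - sInf (SS Λ g y) : ℤ) : ZMod 2) = 1 := by
        have e1 := hparH x
        have e2 := hparH y
        have hd := dcast x y
        rw [hD1] at hd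
        push_cast at e1 e2 hd ⊢
        linear_combination e1 - e2 - hd
      exact abs_one_of (by omega) (by omega) hc
    · intro x hx
      show sInf (SS Λ g x) = g x
      apply le_antisymm
      · have h0 := hmem x x hx
        rw [dself, add_zero] at h0
        exact csInf_le (hSbdd x) h0
      · apply le_csInf (hSne x)
        rintro v ⟨y, hy, rfl⟩
        have : g x - g y ≤ DD x y := le_trans (le_abs_self _) (hlip' x hx y hy)
        linarith
end

section
/- Fix a slope s ∈ R^m with |s|_∞ < 1 and set C = 2/(1 − |s|_∞). Let n' = n + ⌈Cδn⌉ for δ > 0. Let h_n : S_n → Z be a height function with |h_n(x) − ⌊s·x⌋| ≤ δn for all x ∈ ∂S_n, and let h_{∂S_{n'}} be a boundary height function on ∂S_{n'} with |h_{∂S_{n'}}(y) − ⌊s·y⌋| ≤ 1 for all y ∈ ∂S_{n'}. Then for n sufficiently large, for all x ∈ ∂S_n and y ∈ ∂S_{n'}: |h_n(x) − h_{∂S_{n'}}(y)| ≤ |x − y|_{l^1}. -/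
open Filter

/-- `⌊s·x⌋`, the floor of the linear function of slope `s`. -/
noncomputable def floorSlope {d : ℕ} (s : Fin d → ℝ) (x : Fin d → ℤ) : ℤ :=
  ⌊∑ i, s i * (x i : ℝ)⌋

/-- **Lipschitz compatibility for the Kirszbraun step**: fix a slope `s` with
`|s|_∞ ≤ K < 1` and set `C = 2/(1−K)`, `n' = n + ⌈Cδn⌉`. If `h_n` is a height function on
`S_n` with `|h_n(x) − ⌊s·x⌋| ≤ δn` on `∂S_n`, and `h'` is boundary data on `∂S_{n'}` with
`|h'(y) − ⌊s·y⌋| ≤ 1`, then for `n` sufficiently large, all `x ∈ ∂S_n`, `y ∈ ∂S_{n'}`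
(which satisfy `|x−y|₁ ≥ n' − n`): `|h_n(x) − h'(y)| ≤ |x−y|₁`. -/
theorem kirszbraun_compatibility (m : ℕ) (s : Fin m → ℝ) (K : ℝ)
    (hK : ∀ i, |s i| ≤ K) (hK0 : 0 ≤ K) (hK1 : K < 1)
    (δ : ℝ) (hδ : 0 < δ) :
    ∃ N : ℕ, ∀ n ≥ N,
      ∀ (hn h' : (Fin m → ℤ) → ℤ),
        hgt (cubeZ m n) hn →
        (∀ x ∈ ibdZ (cubeZ m n), (|hn x - floorSlope s x| : ℝ) ≤ δ * n) →
        (∀ y ∈ ibdZ (cubeZ m (n + ⌈2 / (1 - K) * δ * n⌉₊)),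
          |h' y - floorSlope s y| ≤ 1) →
        ∀ x ∈ ibdZ (cubeZ m n), ∀ y ∈ ibdZ (cubeZ m (n + ⌈2 / (1 - K) * δ * n⌉₊)),
          ((n + ⌈2 / (1 - K) * δ * n⌉₊ : ℤ) - (n : ℤ) ≤ ∑ i, |x i - y i|) →
          |hn x - h' y| ≤ ∑ i, |x i - y i| := by

  refine ⟨⌈2 / δ⌉₊, fun n hnN hn h' _ hbd hbd' x hx y hy hD => ?_⟩
  have h1K : (0:ℝ) < 1 - K := by linarith
  set D : ℤ := ∑ i, |x i - y i| with hDdef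
  -- real bound on D from below
  have hceil : (2 / (1 - K) * δ * n : ℝ) ≤ (⌈2 / (1 - K) * δ * n⌉₊ : ℝ) := Nat.le_ceil _
  have hDge : (2 / (1 - K) * δ * n : ℝ) ≤ (D : ℝ) := by
    have : ((⌈2 / (1 - K) * δ * n⌉₊ : ℤ) : ℝ) ≤ (D : ℝ) := by
      exact_mod_cast le_trans (by push_cast; linarith : (⌈2 / (1 - K) * δ * n⌉₊ : ℤ) ≤ (n + ⌈2 / (1 - K) * δ * n⌉₊ : ℤ) - (n:ℤ)) hD
    push_cast at this ⊢; linarith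
  have hδn : (2:ℝ) ≤ δ * n := by
    have h1 : (2 / δ : ℝ) ≤ (⌈2 / δ⌉₊ : ℝ) := Nat.le_ceil _
    have h2 : ((⌈2 / δ⌉₊ : ℕ) : ℝ) ≤ (n : ℝ) := by exact_mod_cast hnN
    have : 2 / δ ≤ (n : ℝ) := le_trans h1 h2
    rw [div_le_iff₀ hδ] at this; linarith
  -- bound on |s·x - s·y|
  have hsd : |(∑ i, s i * (x i : ℝ)) - ∑ i, s i * (y i : ℝ)| ≤ K * (D : ℝ) := by
    rw [← Finset.sum_sub_distrib]
    calc |∑ i, (s i * (x i : ℝ) - s i * (y i : ℝ))| ≤ ∑ i, |s i * (x i : ℝ) - s i * (y i : ℝ)| :=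
          Finset.abs_sum_le_sum_abs _ _
      _ ≤ ∑ i, K * |(x i : ℝ) - (y i : ℝ)| := by
          refine Finset.sum_le_sum fun i _ => ?_
          rw [← mul_sub, abs_mul]
          exact mul_le_mul_of_nonneg_right (hK i) (abs_nonneg _)
      _ = K * (D : ℝ) := by
          rw [← Finset.mul_sum, hDdef]; push_cast; ring_nf
  -- floor difference bound
  have hfl : |((floorSlope s x : ℤ) : ℝ) - ((floorSlope s y : ℤ) : ℝ)| ≤ K * (D : ℝ) + 1 := by
    set a := ∑ i, s i * (x i : ℝ)
    set b := ∑ i, s i * (y i : ℝ)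
    have hax : (⌊a⌋ : ℝ) ≤ a := Int.floor_le a
    have hax' : a - 1 < (⌊a⌋ : ℝ) := Int.sub_one_lt_floor a
    have hbx : (⌊b⌋ : ℝ) ≤ b := Int.floor_le b
    have hbx' : b - 1 < (⌊b⌋ : ℝ) := Int.sub_one_lt_floor b
    have hab : |a - b| ≤ K * (D : ℝ) := hsd
    have hxa : floorSlope s x = ⌊a⌋ := rfl
    have hyb : floorSlope s y = ⌊b⌋ := rfl
    rw [hxa, hyb, abs_le] at *
    constructor <;> linarith [hab.1, hab.2]
  have hx' := hbd x hx
  have hy' := hbd' y hy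
  have hy'' : (|h' y - floorSlope s y| : ℝ) ≤ 1 := by exact_mod_cast hy'
  -- triangle inequality
  have htri : (|hn x - h' y| : ℝ) ≤ δ * n + (K * (D:ℝ) + 1) + 1 := by
    have : (|hn x - h' y| : ℝ) ≤ (|hn x - floorSlope s x| : ℝ) +
        |((floorSlope s x : ℤ) : ℝ) - ((floorSlope s y : ℤ) : ℝ)| + (|h' y - floorSlope s y| : ℝ) := by
      push_cast
      have := abs_sub_abs_le_abs_sub ((hn x : ℝ)) ((h' y : ℝ))
      calc |(hn x : ℝ) - (h' y : ℝ)|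
          = |((hn x : ℝ) - (floorSlope s x : ℝ)) + (((floorSlope s x : ℝ)) - (floorSlope s y : ℝ)) + ((floorSlope s y : ℝ) - (h' y : ℝ))| := by ring_nf
        _ ≤ _ := by
            refine le_trans (abs_add_le _ _) ?_
            have := abs_add_le ((hn x : ℝ) - (floorSlope s x : ℝ)) (((floorSlope s x : ℝ)) - (floorSlope s y : ℝ))
            have habs : |(floorSlope s y : ℝ) - (h' y : ℝ)| = |(h' y : ℝ) - (floorSlope s y : ℝ)| := abs_sub_comm _ _
            rw [habs]; linarith
    linarith
  -- final arithmetic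
  have hmul : 2 * (δ * n) ≤ (1 - K) * (D : ℝ) := by
    have := mul_le_mul_of_nonneg_left hDge h1K.le
    calc 2 * (δ * n) = (1 - K) * (2 / (1 - K) * δ * n) := by field_simp
      _ ≤ (1 - K) * (D : ℝ) := this
  have hfinal : (|hn x - h' y| : ℝ) ≤ (D : ℝ) := by nlinarith
  exact_mod_cast hfinal
end
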